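/- Fix constants κ > 0, ε > 0 and σ with 0 < σ < 1. For every ξ ∈ ℝ³ there exist λ ∈ ℂ and Ψ ∈ ℂ⁴ with Ψ ≠ 0 such that the Fourier–Laplace mode with data (λ, ξ, Ψ) solves the linearized RAV Euler equations; moreover, if ξ ≠ 0, then every λ ∈ ℂ for which some Ψ ≠ 0 yields a Fourier–Laplace mode solution satisfies λ ≠ 0. -/

import Mathlib

open Filter

/-- Partial derivative in the `i`-th coordinate of a complex-valued function on `ℝ⁴`
(coordinate `0` is time, coordinates `1,2,3` are space). -/
noncomputable def pd (i : Fin 4) (f : (Fin 4 → ℝ) → ℂ) (x : Fin 4 → ℝ) : ℂ :=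
  deriv (fun s : ℝ => f (Function.update x i s)) (x i)

/-- The linearized RAV Euler equations:
`∂ₜρ + κ(∂₁u¹+∂₂u²+∂₃u³) = 0` and
`κ·∂ₜuʲ + σ²·∂ⱼρ = ε·(−∂ₜₜ + ∂₁₁ + ∂₂₂ + ∂₃₃)uʲ` for `j = 1,2,3`. -/
def LinearizedRAV (κ ε σ : ℝ) (ρ : (Fin 4 → ℝ) → ℂ) (u : Fin 3 → (Fin 4 → ℝ) → ℂ) : Prop :=
  (∀ x, pd 0 ρ x + (κ : ℂ) * ∑ j : Fin 3, pd j.succ (u j) x = 0) ∧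
  (∀ j : Fin 3, ∀ x, (κ : ℂ) * pd 0 (u j) x + (σ : ℂ) ^ 2 * pd j.succ ρ x
      = (ε : ℂ) * (-(pd 0 (pd 0 (u j)) x) + ∑ k : Fin 3, pd k.succ (pd k.succ (u j)) x))

/-- The Fourier–Laplace mode with temporal frequency `lam`, wave vector `ξ`
and amplitude `c`: `c · exp(λ t + i ⟨ξ, x⟩)`. -/
noncomputable def FLmode (lam : ℂ) (ξ : Fin 3 → ℝ) (c : ℂ) : (Fin 4 → ℝ) → ℂ :=
  fun x => c * Complex.exp (lam * (x 0 : ℂ) + Complex.I * ∑ j : Fin 3, (ξ j : ℂ) * (x j.succ : ℂ))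

noncomputable def coef (lam : ℂ) (ξ : Fin 3 → ℝ) : Fin 4 → ℂ :=
  Fin.cons lam (fun j => Complex.I * (ξ j : ℂ))

lemma FLmode_eq (lam : ℂ) (ξ : Fin 3 → ℝ) (c : ℂ) (x : Fin 4 → ℝ) :
    FLmode lam ξ c x = c * Complex.exp (∑ i : Fin 4, coef lam ξ i * (x i : ℂ)) := by
  unfold FLmode coef
  congr 1
  simp only [Fin.sum_univ_succ, Fin.cons_zero, Fin.cons_succ, Finset.univ_eq_empty,
    Finset.sum_empty, add_zero]
  congr 1
  ring

lemma pd_FLmode (lam : ℂ) (ξ : Fin 3 → ℝ) (c : ℂ) (i : Fin 4) :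
    pd i (FLmode lam ξ c) = FLmode lam ξ (coef lam ξ i * c) := by
  funext x
  unfold pd
  set S : ℂ := ∑ k : Fin 4, coef lam ξ k * (x k : ℂ) with hS
  have hrw : (fun s : ℝ => FLmode lam ξ c (Function.update x i s))
      = fun s : ℝ => c * Complex.exp (coef lam ξ i * s + (S - coef lam ξ i * x i)) := by
    funext s
    rw [FLmode_eq]
    congr 2
    have h1 : ∀ k : Fin 4, coef lam ξ k * ((Function.update x i s k : ℝ) : ℂ)
        = Function.update (fun k => coef lam ξ k * (x k : ℂ)) i (coef lam ξ i * s) k := by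
      intro k
      rcases eq_or_ne k i with h | h
      · subst h; simp
      · simp [Function.update_of_ne h]
    rw [Finset.sum_congr rfl (fun k _ => h1 k),
      Finset.sum_update_of_mem (Finset.mem_univ i),
      Finset.sum_sdiff_eq_sub (Finset.singleton_subset_iff.mpr (Finset.mem_univ i)),
      Finset.sum_singleton]
  rw [hrw]
  have h1 : HasDerivAt (fun s : ℝ => (s : ℂ)) 1 (x i) := by
    simpa using (hasDerivAt_id (x i)).ofReal_comp
  have hd : HasDerivAt (fun s : ℝ => c * Complex.exp (coef lam ξ i * s + (S - coef lam ξ i * x i)))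
      (c * (Complex.exp (coef lam ξ i * x i + (S - coef lam ξ i * x i)) * (coef lam ξ i * 1))) (x i) :=
    (((h1.const_mul (coef lam ξ i)).add_const _).cexp).const_mul c
  rw [hd.deriv, FLmode_eq]
  have : coef lam ξ i * (x i : ℂ) + (S - coef lam ξ i * x i) = S := by ring
  rw [this]
  ring

@[simp] lemma coef_zero (lam : ℂ) (ξ : Fin 3 → ℝ) : coef lam ξ 0 = lam := rfl
@[simp] lemma coef_succ (lam : ℂ) (ξ : Fin 3 → ℝ) (j : Fin 3) :
    coef lam ξ j.succ = Complex.I * (ξ j : ℂ) := rfl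


lemma solves_iff (κ ε σ : ℝ) (lam : ℂ) (ξ : Fin 3 → ℝ) (Ψ : Fin 4 → ℂ) :
    LinearizedRAV κ ε σ (FLmode lam ξ (Ψ 0)) (fun j => FLmode lam ξ (Ψ j.succ)) ↔
    (lam * Ψ 0 + (κ : ℂ) * ∑ j : Fin 3, Complex.I * (ξ j : ℂ) * Ψ j.succ = 0) ∧
    (∀ j : Fin 3, (κ : ℂ) * (lam * Ψ j.succ) + (σ : ℂ) ^ 2 * (Complex.I * (ξ j : ℂ) * Ψ 0)
      = (ε : ℂ) * (-(lam * (lam * Ψ j.succ))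
          + ∑ k : Fin 3, Complex.I * (ξ k : ℂ) * (Complex.I * (ξ k : ℂ) * Ψ j.succ))) := by
  unfold LinearizedRAV
  simp only [pd_FLmode, coef_zero, coef_succ, FLmode_eq]
  constructor
  · rintro ⟨h1, h2⟩
    refine ⟨?_, fun j => ?_⟩
    · simpa using h1 0
    · simpa using h2 j 0
  · rintro ⟨h1, h2⟩
    refine ⟨fun x => ?_, fun j x => ?_⟩
    · rw [← Finset.sum_mul]
      linear_combination Complex.exp (∑ i : Fin 4, coef lam ξ i * (x i : ℂ)) * h1
    · rw [← Finset.sum_mul]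
      linear_combination Complex.exp (∑ i : Fin 4, coef lam ξ i * (x i : ℂ)) * h2 j

/-- For every `ξ ∈ ℝ³` there is a nontrivial Fourier–Laplace mode solution of the
linearized RAV Euler equations, and if `ξ ≠ 0`, any such mode has `λ ≠ 0`. -/
theorem existence_of_FL_modes (κ ε σ : ℝ) (hκ : 0 < κ) (hε : 0 < ε)
    (hσ0 : 0 < σ) (hσ1 : σ < 1) :
    ∀ ξ : Fin 3 → ℝ,
      (∃ (lam : ℂ) (Ψ : Fin 4 → ℂ), Ψ ≠ 0 ∧
        LinearizedRAV κ ε σ (FLmode lam ξ (Ψ 0)) (fun j => FLmode lam ξ (Ψ j.succ))) ∧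
      (ξ ≠ 0 → ∀ (lam : ℂ) (Ψ : Fin 4 → ℂ), Ψ ≠ 0 →
        LinearizedRAV κ ε σ (FLmode lam ξ (Ψ 0)) (fun j => FLmode lam ξ (Ψ j.succ)) →
        lam ≠ 0) := by
  intro ξ
  have hε' : (ε : ℂ) ≠ 0 := by exact_mod_cast hε.ne'
  have hκ' : (κ : ℂ) ≠ 0 := by exact_mod_cast hκ.ne'
  have hσ' : (σ : ℂ) ≠ 0 := by exact_mod_cast hσ0.ne'
  set N : ℝ := ∑ k : Fin 3, (ξ k) ^ 2 with hN
  have hNc : ((N : ℝ) : ℂ) = ∑ k : Fin 3, ((ξ k : ℂ)) ^ 2 := by rw [hN]; push_cast; rfl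
  have hsum : ∀ c : ℂ, (∑ k : Fin 3, Complex.I * (ξ k : ℂ) * (Complex.I * (ξ k : ℂ) * c))
      = -((N : ℝ) : ℂ) * c := by
    intro c
    rw [Finset.sum_congr rfl (fun k _ => show
        Complex.I * (ξ k : ℂ) * (Complex.I * (ξ k : ℂ) * c) = -(((ξ k : ℂ)) ^ 2) * c from by
      linear_combination ((ξ k : ℂ)) ^ 2 * c * Complex.I_sq)]
    rw [← Finset.sum_mul, hNc]
    congr 1
    simp
  constructor
  · -- existence
    obtain ⟨v, hv0, hperp⟩ : ∃ v : Fin 3 → ℂ, v ≠ 0 ∧ ∑ j : Fin 3, (ξ j : ℂ) * v j = 0 := by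
      by_cases h : ξ 0 = 0 ∧ ξ 1 = 0
      · refine ⟨![1, 0, 0], ?_, ?_⟩
        · intro hv; have := congrFun hv 0; simp at this
        · simp [Fin.sum_univ_three, h.1]
      · refine ⟨![-(ξ 1 : ℂ), (ξ 0 : ℂ), 0], ?_, ?_⟩
        · intro hv
          apply h
          constructor
          · have := congrFun hv 1; simpa using this
          · have := congrFun hv 0; simpa using this
        · simp [Fin.sum_univ_three]; ring
    set s : ℂ := ((κ : ℂ) ^ 2 - 4 * (ε : ℂ) ^ 2 * ((N : ℝ) : ℂ)) ^ (((2 : ℕ) : ℂ))⁻¹ with hsdef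
    have hs : s ^ 2 = (κ : ℂ) ^ 2 - 4 * (ε : ℂ) ^ 2 * ((N : ℝ) : ℂ) := by
      rw [hsdef]
      exact_mod_cast Complex.cpow_nat_inv_pow _ (two_ne_zero)
    set lam : ℂ := (-(κ : ℂ) + s) / (2 * ε) with hlam
    have hquad : (ε : ℂ) * lam ^ 2 + (κ : ℂ) * lam + (ε : ℂ) * ((N : ℝ) : ℂ) = 0 := by
      rw [hlam]
      field_simp
      ring_nf
      linear_combination hs
    refine ⟨lam, Fin.cons 0 v, ?_, ?_⟩
    · intro h
      apply hv0
      funext j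
      have := congrFun h j.succ
      simpa using this
    · rw [solves_iff]
      constructor
      · simp only [Fin.cons_zero, Fin.cons_succ, mul_zero, zero_add]
        have : (∑ j : Fin 3, Complex.I * (ξ j : ℂ) * v j)
            = Complex.I * ∑ j : Fin 3, (ξ j : ℂ) * v j := by
          rw [Finset.mul_sum]; exact Finset.sum_congr rfl fun j _ => by ring
        rw [this, hperp, mul_zero, mul_zero]
      · intro j
        simp only [Fin.cons_zero, Fin.cons_succ, mul_zero]
        rw [hsum]
        linear_combination v j * hquad
  · -- nonzero
    intro hξ lam Ψ hΨ hsol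
    intro hlam0
    subst hlam0
    rw [solves_iff] at hsol
    obtain ⟨h1, h2⟩ := hsol
    have hNpos : 0 < N := by
      obtain ⟨k, hk⟩ := Function.ne_iff.mp hξ
      rw [hN]
      exact Finset.sum_pos' (fun i _ => sq_nonneg _) ⟨k, Finset.mem_univ k, sq_pos_iff.mpr hk⟩
    have hN' : ((N : ℝ) : ℂ) ≠ 0 := by exact_mod_cast hNpos.ne'
    have hj : ∀ j : Fin 3, (ε : ℂ) * ((N : ℝ) : ℂ) * Ψ j.succ
        = -((σ : ℂ) ^ 2 * Complex.I * (ξ j : ℂ) * Ψ 0) := by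
      intro j
      have h := h2 j
      rw [hsum] at h
      linear_combination h
    have hsum1 : ∑ j : Fin 3, Complex.I * (ξ j : ℂ) * Ψ j.succ = 0 := by
      have := h1
      rw [zero_mul, zero_add] at this
      exact (mul_eq_zero.mp this).resolve_left hκ'
    have hkey : (σ : ℂ) ^ 2 * ((N : ℝ) : ℂ) * Ψ 0 = 0 := by
      have hA : (ε : ℂ) * ((N : ℝ) : ℂ) * (∑ j : Fin 3, Complex.I * (ξ j : ℂ) * Ψ j.succ)
          = ∑ j : Fin 3, Complex.I * (ξ j : ℂ) * ((ε : ℂ) * ((N : ℝ) : ℂ) * Ψ j.succ) := by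
        rw [Finset.mul_sum]; exact Finset.sum_congr rfl fun j _ => by ring
      rw [hsum1, mul_zero] at hA
      rw [Finset.sum_congr rfl (fun j _ => by rw [hj j])] at hA
      have hB : ∑ j : Fin 3, Complex.I * (ξ j : ℂ)
            * -((σ : ℂ) ^ 2 * Complex.I * (ξ j : ℂ) * Ψ 0)
          = (σ : ℂ) ^ 2 * ((N : ℝ) : ℂ) * Ψ 0 := by
        rw [Finset.sum_congr rfl (fun k _ => show
            Complex.I * (ξ k : ℂ) * -((σ : ℂ) ^ 2 * Complex.I * (ξ k : ℂ) * Ψ 0)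
              = (σ : ℂ) ^ 2 * ((ξ k : ℂ)) ^ 2 * Ψ 0 from by
          linear_combination -(σ : ℂ) ^ 2 * ((ξ k : ℂ)) ^ 2 * Ψ 0 * Complex.I_sq)]
        rw [hNc, Finset.mul_sum, Finset.sum_mul]
      rw [hB] at hA
      exact hA.symm
    have hΨ0 : Ψ 0 = 0 := by
      have := mul_eq_zero.mp hkey
      rcases this with h | h
      · exact absurd h (by simp [pow_eq_zero_iff, hσ', hN', mul_eq_zero])
      · exact h
    apply hΨ
    funext i
    refine Fin.cases ?_ ?_ i
    · exact hΨ0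
    · intro j
      have := hj j
      rw [hΨ0, mul_zero, neg_zero] at this
      have := mul_eq_zero.mp this
      simpa [hε', hN'] using this
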